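/- arXiv:1307.7896 — 2 statements merged into one kernel-verified Lean document; each statement's English description precedes it below -/
import Mathlib

section
/- The vector v₁ = 1 ⊗ v_{∅,∅} ⊗ e^{−α} ∈ V satisfies X(0)v₁ = 0, Y(1)v₁ = 0, X(−1)v₁ = 0, H(0)v₁ = −2v₁, and d·v₁ = −(1/2)v₁; hence v₁ is a highest weight vector for the representation π of affine sl₂ at the critical level c = −2, of weight −2Λ₁ − (1/2)δ (the Chevalley generators act by e₀v₁ = Y(1)v₁ = 0, e₁v₁ = X(0)v₁ = 0, f₀v₁ = X(−1)v₁ = 0, h₀v₁ = (−H(0)+c)v₁ = 0, h₁v₁ = H(0)v₁ = −2v₁). -/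
open MvPolynomial

/-- The semi-infinite wedge space `Λ`: complex vector space with basis `v_{S,T}`
indexed by pairs `(S, T)` of finite subsets of the positive integers.  The basis
vector `v_{S,T}` encodes the semi-infinite wedge product with support
`supp(S,T) = {-s-1/2 : s ∈ S} ∪ {-1/2} ∪ {k+1/2 : k ∈ ℤ_{≥1}, k ∉ T} ⊆ ℤ + 1/2`. -/
abbrev Wedge : Type := (Finset ℕ+ × Finset ℕ+) →₀ ℂ

/-- Image of the basis vector `v_{S,T}` under the operator `A(m)` (for `m ∈ ℤ + 1/2`,
i.e. a rational with denominator `2`; `A(m) := 0` for other rationals).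
`A(m) v_{S,T} = 0` if `m ∈ supp(S,T)` or `m = 1/2`; otherwise
`A(m) v_{S,T} = (m - 1/2) ⬝ (-1)^j ⬝ v_{S',T'}` where `j = #{i ∈ supp(S,T) : i < m}`
and `supp(S',T') = supp(S,T) ∪ {m}`.  Writing `m = n + 1/2` with `n = ⌊m⌋ ∈ ℤ`:
if `n ≥ 1` then `m ∈ supp(S,T)` iff `n ∉ T`, and the new support corresponds to
`(S, T \ {n})` with sign exponent `j = |S| + n - #{t ∈ T : t < n}`;
if `n ≤ -2` then `m = -s - 1/2` with `s = -n-1 ≥ 1`, `m ∈ supp(S,T)` iff `s ∈ S`,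
and the new support corresponds to `(S ∪ {s}, T)` with `j = #{s' ∈ S : s' > s}`;
if `n = 0` (`m = 1/2`) or `n = -1` (`m = -1/2 ∈ supp(S,T)`) the result is `0`. -/
noncomputable def Abasis (m : ℚ) (ST : Finset ℕ+ × Finset ℕ+) : Wedge :=
  if m.den = 2 then
    let n : ℤ := ⌊m⌋
    if hn : 1 ≤ n then
      let k : ℕ+ := ⟨n.toNat, by omega⟩
      if k ∈ ST.2 then
        (((n : ℂ)) * (-1) ^ (ST.1.card + n.toNat - (ST.2.filter (· < k)).card)) •
          Finsupp.single (ST.1, ST.2.erase k) (1 : ℂ)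
      else 0
    else if hn' : n ≤ -2 then
      let s : ℕ+ := ⟨(-n - 1).toNat, by omega⟩
      if s ∈ ST.1 then 0
      else
        (((n : ℂ)) * (-1) ^ ((ST.1.filter (s < ·)).card)) •
          Finsupp.single (insert s ST.1, ST.2) (1 : ℂ)
    else 0
  else 0

/-- Image of the basis vector `v_{S,T}` under the operator `A*(m)` (for `m ∈ ℤ + 1/2`).
`A*(m) v_{S,T} = 0` if `-m ∉ supp(S,T)` or `m = 1/2`; otherwise
`A*(m) v_{S,T} = (m - 1/2) ⬝ (-1)^{j'} ⬝ v_{S'',T''}` where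
`j' = #{i ∈ supp(S,T) : i < -m}` and `supp(S'',T'') = supp(S,T) \ {-m}`.
Writing `m = n + 1/2`, `n = ⌊m⌋`: if `n ≥ 1` then `-m = -n - 1/2 ∈ supp(S,T)` iff
`n ∈ S`, new pair `(S \ {n}, T)`, `j' = #{s' ∈ S : s' > n}`; if `n ≤ -2` then
`-m = k + 1/2` with `k = -n-1 ≥ 1`, `-m ∈ supp(S,T)` iff `k ∉ T`, new pair
`(S, T ∪ {k})`, `j' = |S| + k - #{t ∈ T : t < k}`; otherwise `0`. -/
noncomputable def AstarBasis (m : ℚ) (ST : Finset ℕ+ × Finset ℕ+) : Wedge :=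
  if m.den = 2 then
    let n : ℤ := ⌊m⌋
    if hn : 1 ≤ n then
      let s : ℕ+ := ⟨n.toNat, by omega⟩
      if s ∈ ST.1 then
        (((n : ℂ)) * (-1) ^ ((ST.1.filter (s < ·)).card)) •
          Finsupp.single (ST.1.erase s, ST.2) (1 : ℂ)
      else 0
    else if hn' : n ≤ -2 then
      let k : ℕ+ := ⟨(-n - 1).toNat, by omega⟩
      if k ∈ ST.2 then 0
      else
        (((n : ℂ)) * (-1) ^ (ST.1.card + (-n - 1).toNat - (ST.2.filter (· < k)).card)) •
          Finsupp.single (ST.1, insert k ST.2) (1 : ℂ)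
    else 0
  else 0

/-- The operator `A(m)` on the semi-infinite wedge space `Λ`, extended linearly. -/
noncomputable def Aop (m : ℚ) : Wedge →ₗ[ℂ] Wedge :=
  Finsupp.lsum ℂ fun ST => LinearMap.toSpanSingleton ℂ Wedge (Abasis m ST)

/-- The operator `A*(m)` on the semi-infinite wedge space `Λ`, extended linearly. -/
noncomputable def AstarOp (m : ℚ) : Wedge →ₗ[ℂ] Wedge :=
  Finsupp.lsum ℂ fun ST => LinearMap.toSpanSingleton ℂ Wedge (AstarBasis m ST)

/-- The Fock space `F = ℂ[x_1, x_2, ...]`, a polynomial ring in countably many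
variables indexed by the positive integers. -/
abbrev Fock : Type := MvPolynomial ℕ+ ℂ

/-- Endomorphisms of the Fock space. -/
abbrev EndF : Type := Module.End ℂ Fock

/-- The Heisenberg operators on the Fock space: `H(-n)` is multiplication by `x_n`
and `H(n) = -4n ∂/∂x_n` for `n ≥ 1` (and `0` for `n = 0`, which is never used). -/
noncomputable def HF (n : ℤ) : EndF :=
  if hn : 1 ≤ n then ((-4 : ℂ) * (n : ℂ)) • (pderiv (⟨n.toNat, by omega⟩ : ℕ+)).toLinearMap
  else if hn' : n ≤ -1 then LinearMap.mulLeft ℂ (X (⟨(-n).toNat, by omega⟩ : ℕ+))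
  else 0

/-- `sgn true = -1`, `sgn false = 1`: the sign `∓` attached to the label `ε ∈ {+, -}`
(`ε = +` is `true`), as in `E^±_+(z) = exp(∓ Σ_{n>0} x_n z^n / (2n))`. -/
def sgn (ε : Bool) : ℂ := if ε then -1 else 1

/-- The coefficient of `z^k` in the exponential `exp(g(z)) = Σ_j g(z)^j / j!` of an
operator-valued formal power series `g` (with zero constant term, so that only the
terms `j ≤ k` contribute to the coefficient of `z^k`). -/
noncomputable def expCoeff (g : PowerSeries EndF) (k : ℕ) : EndF :=
  ∑ j ∈ Finset.range (k + 1), ((j.factorial : ℂ))⁻¹ • (PowerSeries.coeff k (g ^ j))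

/-- The series `∓ Σ_{n > 0} x_n z^n / (2n)` (multiplication operators). -/
noncomputable def dSeries (ε : Bool) : PowerSeries EndF :=
  PowerSeries.mk fun n =>
    if hn : 0 < n then sgn ε • (((2 * n : ℂ))⁻¹ • LinearMap.mulLeft ℂ (X (⟨n, hn⟩ : ℕ+)))
    else 0

/-- The series `∓ 2 Σ_{n > 0} (∂/∂x_n) w^n`, where `w` stands for `z^{-1}`. -/
noncomputable def cSeries (ε : Bool) : PowerSeries EndF :=
  PowerSeries.mk fun n =>
    if hn : 0 < n then sgn ε • ((2 : ℂ) • (pderiv (⟨n, hn⟩ : ℕ+)).toLinearMap)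
    else 0

/-- `d^ε_l`, the coefficient of `z^l` in `E^ε_+(z) = exp(∓ Σ_{n>0} x_n z^n/(2n))`. -/
noncomputable def dOp (ε : Bool) (l : ℕ) : EndF := expCoeff (dSeries ε) l

/-- `c^ε_k`, the coefficient of `z^{-k}` in `E^ε_-(z) = exp(∓ 2 Σ_{n>0} (∂/∂x_n) z^{-n})`. -/
noncomputable def cOp (ε : Bool) (k : ℕ) : EndF := expCoeff (cSeries ε) k

/-- The space `V = F ⊗ Λ ⊗ ℂ[ℤα]`, realized as finitely supported functions from
the basis `{v_{S,T} ⊗ e^{pα}}` of `Λ ⊗ ℂ[ℤα]` to the Fock space `F`: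
the index `((S,T), p)` records the basis vector `v_{S,T} ⊗ e^{pα}` and the value
is the `F`-coordinate, so `Finsupp.single ((S,T), p) f` is `f ⊗ v_{S,T} ⊗ e^{pα}`. -/
abbrev VV : Type := ((Finset ℕ+ × Finset ℕ+) × ℤ) →₀ Fock

/-- `emb w p f` is the element `f ⊗ w ⊗ e^{pα}` of `V` for `w ∈ Λ`. -/
noncomputable def emb (w : Wedge) (p : ℤ) (f : Fock) : VV :=
  w.sum fun ST c => Finsupp.single (ST, p) (c • f)

/-- The operator `X(m)` of the representation `π` on `V`:
`X(m)(f ⊗ v_{S,T} ⊗ e^{pα}) = Σ_{l,k ≥ 0} (d^+_l c^+_k f) ⊗ A(m+l-k-p-1/2) v_{S,T} ⊗ e^{(p+1)α}`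
(only finitely many summands are nonzero on each vector). -/
noncomputable def Xop (m : ℤ) : VV → VV := fun u =>
  u.sum fun STp f =>
    ∑ᶠ lk : ℕ × ℕ,
      emb (Abasis ((m : ℚ) + lk.1 - lk.2 - STp.2 - 1/2) STp.1) (STp.2 + 1)
        (dOp true lk.1 (cOp true lk.2 f))

/-- The operator `Y(m)` of the representation `π` on `V`:
`Y(m)(f ⊗ v_{S,T} ⊗ e^{pα}) = Σ_{l,k ≥ 0} (d^-_l c^-_k f) ⊗ A*(m+l-k+p-1/2) v_{S,T} ⊗ e^{(p-1)α}`. -/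
noncomputable def Yop (m : ℤ) : VV → VV := fun u =>
  u.sum fun STp f =>
    ∑ᶠ lk : ℕ × ℕ,
      emb (AstarBasis ((m : ℚ) + lk.1 - lk.2 + STp.2 - 1/2) STp.1) (STp.2 - 1)
        (dOp false lk.1 (cOp false lk.2 f))

/-- The operator `H(m)` of the representation `π` on `V`: for `m ≠ 0` it acts as
`H(m)` on the Fock factor, and `H(0)` acts on `f ⊗ v ⊗ e^{pα}` by the scalar `2p`. -/
noncomputable def HVop (m : ℤ) : VV → VV := fun u =>
  u.sum fun STp f =>
    Finsupp.single STp (if m = 0 then ((2 : ℂ) * (STp.2 : ℂ)) • f else HF m f)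

/-- The weight of a monomial `x₁^{a₁} x₂^{a₂} ⋯`, namely `Σ n aₙ`. -/
def wtMon (μ : ℕ+ →₀ ℕ) : ℚ := μ.sum fun n a => (n : ℚ) * a

/-- The degree of the basis vector `v_{S,T}` of `Λ`: `Σ_{s∈S} s + Σ_{t∈T} t`. -/
def degWedge (ST : Finset ℕ+ × Finset ℕ+) : ℚ :=
  (∑ s ∈ ST.1, (s : ℚ)) + ∑ t ∈ ST.2, (t : ℚ)

/-- The degree operator `d` of the representation `π` on `V`:
`d (f ⊗ v_{S,T} ⊗ e^{pα}) = (-wt(f) - deg(v_{S,T}) - p²/2) ⬝ (f ⊗ v_{S,T} ⊗ e^{pα})`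
on monomials `f`. -/
noncomputable def dV : VV → VV := fun u =>
  u.sum fun STp f =>
    Finsupp.single STp
      (∑ μ ∈ f.support,
        monomial μ
          ((((-(wtMon μ) - degWedge STp.1 - (STp.2 : ℚ) ^ 2 / 2 : ℚ) : ℂ)) * coeff μ f))

/-- The vacuum space `Ω = Λ ⊗ ℂ[ℤα]`, with basis `{v_{S,T} ⊗ e^{pα}}`. -/
abbrev Vac : Type := ((Finset ℕ+ × Finset ℕ+) × ℤ) →₀ ℂ

/-- `embVac w p` is the element `w ⊗ e^{pα}` of `Ω` for `w ∈ Λ`. -/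
noncomputable def embVac (w : Wedge) (p : ℤ) : Vac :=
  w.sum fun ST c => Finsupp.single (ST, p) c

/-- The operator `Z⁺(m)` on `Ω`: `Z⁺(m)(v ⊗ e^{pα}) = A(m-p-1/2)v ⊗ e^{(p+1)α}`. -/
noncomputable def Zplus (m : ℤ) : Vac → Vac := fun u =>
  u.sum fun STp c => c • embVac (Abasis ((m : ℚ) - STp.2 - 1/2) STp.1) (STp.2 + 1)

/-- The operator `Z⁻(m)` on `Ω`: `Z⁻(m)(v ⊗ e^{pα}) = A*(m+p-1/2)v ⊗ e^{(p-1)α}`. -/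
noncomputable def Zminus (m : ℤ) : Vac → Vac := fun u =>
  u.sum fun STp c => c • embVac (AstarBasis ((m : ℚ) + STp.2 - 1/2) STp.1) (STp.2 - 1)

/-- Extension to `V = F ⊗ Λ ⊗ ℂ[ℤα]` of an operator `e` on the Fock factor,
i.e. `e ⊗ 1 ⊗ 1`. -/
noncomputable def extF (e : EndF) : VV → VV := fun u =>
  u.sum fun STp f => Finsupp.single STp (e f)

/-- The operator `Z⁺(m) = Σ_{a,b≥0} (d⁻_a ⊗ 1 ⊗ 1) ∘ X(m+a-b) ∘ (c⁻_b ⊗ 1 ⊗ 1)` on `V`,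
the coefficient of `z^{-m}` in `E⁻₊(z) X(z) E⁻₋(z)` (only finitely many summands act
nontrivially on each vector). -/
noncomputable def ZplusV (m : ℤ) : VV → VV := fun u =>
  ∑ᶠ ab : ℕ × ℕ,
    extF (dOp false ab.1) (Xop (m + (ab.1 : ℤ) - (ab.2 : ℤ)) (extF (cOp false ab.2) u))

/-- The operator `Z⁻(m) = Σ_{a,b≥0} (d⁺_a ⊗ 1 ⊗ 1) ∘ Y(m+a-b) ∘ (c⁺_b ⊗ 1 ⊗ 1)` on `V`,
the coefficient of `z^{-m}` in `E⁺₊(z) Y(z) E⁺₋(z)`. -/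
noncomputable def ZminusV (m : ℤ) : VV → VV := fun u =>
  ∑ᶠ ab : ℕ × ℕ,
    extF (dOp true ab.1) (Yop (m + (ab.1 : ℤ) - (ab.2 : ℤ)) (extF (cOp true ab.2) u))

/-- `Ncount j` is the number of quadruples `(a, S, T, p)` with `a : ℤ_{≥1} → ℤ_{≥0}`
finitely supported, `S, T` finite subsets of the positive integers and `p ∈ ℤ`,
satisfying `2 Σ_{n≥1} n a(n) + 2 (Σ_{s∈S} s + Σ_{t∈T} t) + p² = j`; this is the
dimension of the eigenspace of `d` with eigenvalue `-j/2` on `V`. -/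
noncomputable def Ncount (j : ℕ) : ℕ :=
  Nat.card {q : (ℕ+ →₀ ℕ) × Finset ℕ+ × Finset ℕ+ × ℤ //
    2 * (q.1.sum fun n a => (n : ℤ) * a) +
      2 * ((∑ s ∈ q.2.1, (s : ℤ)) + ∑ t ∈ q.2.2.1, (t : ℤ)) + q.2.2.2 ^ 2 = (j : ℤ)}


lemma emb_zero_left (p : ℤ) (f : Fock) : emb 0 p f = 0 := by
  simp [emb]

lemma emb_zero_right (w : Wedge) (p : ℤ) : emb w p 0 = 0 := by
  simp [emb]

lemma Abasis_empty (m : ℚ) (h : (-1 : ℚ) ≤ m) : Abasis m (∅, ∅) = 0 := by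
  have hf : (-1 : ℤ) ≤ ⌊m⌋ := Int.le_floor.2 (by push_cast; linarith)
  unfold Abasis
  split_ifs with h1 h2 h3 h4 <;> simp_all <;> split_ifs with h5 h6 h7
  · exact absurd h6 (Finset.notMem_empty _)
  · rfl
  · rfl
  · omega
  · rfl

lemma AstarBasis_empty (m : ℚ) (h : (-1 : ℚ) ≤ m) : AstarBasis m (∅, ∅) = 0 := by
  have hf : (-1 : ℤ) ≤ ⌊m⌋ := Int.le_floor.2 (by push_cast; linarith)
  unfold AstarBasis
  split_ifs with h1 h2 h3 h4 <;> simp_all <;> split_ifs with h5 h6 h7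
  · exact absurd h6 (Finset.notMem_empty _)
  · rfl
  · rfl
  · omega
  · rfl

lemma cSeries_coeff_one (ε : Bool) (n : ℕ) :
    (PowerSeries.coeff n (cSeries ε)) (1 : Fock) = 0 := by
  simp only [cSeries, PowerSeries.coeff_mk]
  split_ifs with h
  · have : ((sgn ε • ((2 : ℂ) • (pderiv (⟨n, h⟩ : ℕ+)).toLinearMap) : EndF)) (1 : Fock)
        = sgn ε • (2 : ℂ) • ((pderiv (⟨n, h⟩ : ℕ+)) (1 : Fock)) := rfl
    have h0 : (pderiv (⟨n, h⟩ : ℕ+)) (1 : Fock) = 0 := Derivation.map_one_eq_zero _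
    rw [this, h0, smul_zero, smul_zero]
    rfl
  · rfl

lemma cSeries_pow_one (ε : Bool) (j k : ℕ) (hj : 1 ≤ j) :
    (PowerSeries.coeff k ((cSeries ε) ^ j)) (1 : Fock) = 0 := by
  obtain ⟨i, rfl⟩ : ∃ i, j = i + 1 := ⟨j - 1, by omega⟩
  rw [pow_succ, PowerSeries.coeff_mul]
  rw [LinearMap.coe_sum, Finset.sum_apply]
  refine Finset.sum_eq_zero fun p _ => ?_
  rw [Module.End.mul_apply, cSeries_coeff_one, map_zero]

lemma cOp_one (ε : Bool) (k : ℕ) (hk : 1 ≤ k) : cOp ε k (1 : Fock) = 0 := by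
  unfold cOp expCoeff
  rw [LinearMap.coe_sum, Finset.sum_apply]
  refine Finset.sum_eq_zero fun j _ => ?_
  rw [LinearMap.smul_apply]
  rcases Nat.eq_zero_or_pos j with rfl | hj
  · rw [pow_zero]
    have : (PowerSeries.coeff k (1 : PowerSeries EndF)) = 0 := by
      rw [PowerSeries.coeff_one, if_neg (by omega)]
    rw [this]; simp
  · rw [cSeries_pow_one ε j k hj, smul_zero]

theorem statement12 :
    ∀ v1 : VV, v1 = Finsupp.single ((∅, ∅), -1) 1 →
      Xop 0 v1 = 0 ∧ Yop 1 v1 = 0 ∧ Xop (-1) v1 = 0 ∧ HVop 0 v1 = (-2 : ℂ) • v1 ∧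
      dV v1 = (-(1/2) : ℂ) • v1 ∧ -(HVop 0 v1) + (-2 : ℂ) • v1 = 0 := by
  intro v1 hv1
  subst hv1
  have hH : HVop 0 (Finsupp.single ((∅, ∅), -1) (1 : Fock)) =
      (-2 : ℂ) • Finsupp.single ((∅, ∅), -1) (1 : Fock) := by
    unfold HVop
    rw [Finsupp.sum_single_index (by simp), Finsupp.smul_single]
    norm_num
  have hX : ∀ (m : ℤ), ((-1 : ℚ) ≤ m + 1 - 1/2) →
      Xop m (Finsupp.single ((∅, ∅), -1) (1 : Fock)) = 0 := by
    intro m hm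
    unfold Xop
    rw [Finsupp.sum_single_index]
    · refine finsum_eq_zero_of_forall_eq_zero fun lk => ?_
      rcases lk with ⟨l, k⟩
      rcases Nat.eq_zero_or_pos k with rfl | hk
      · rw [Abasis_empty _ (by push_cast; nlinarith [Nat.cast_nonneg (α := ℚ) l]),
          emb_zero_left]
      · rw [cOp_one _ _ hk, map_zero, emb_zero_right]
    · refine finsum_eq_zero_of_forall_eq_zero fun lk => ?_
      rw [map_zero, map_zero, emb_zero_right]
  refine ⟨hX 0 (by norm_num), ?_, hX (-1) (by norm_num), hH, ?_, by rw [hH]; simp⟩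
  · unfold Yop
    rw [Finsupp.sum_single_index]
    · refine finsum_eq_zero_of_forall_eq_zero fun lk => ?_
      rcases lk with ⟨l, k⟩
      rcases Nat.eq_zero_or_pos k with rfl | hk
      · rw [AstarBasis_empty _ (by push_cast; nlinarith [Nat.cast_nonneg (α := ℚ) l]),
          emb_zero_left]
      · rw [cOp_one _ _ hk, map_zero, emb_zero_right]
    · refine finsum_eq_zero_of_forall_eq_zero fun lk => ?_
      rw [map_zero, map_zero, emb_zero_right]
  · unfold dV
    rw [Finsupp.sum_single_index (by simp)]
    have hsupp : (1 : Fock).support = {0} := by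
      rw [show (1 : Fock) = monomial 0 1 from by simp]
      rw [MvPolynomial.support_monomial]
      simp
    rw [hsupp, Finset.sum_singleton]
    have hwt : wtMon (0 : ℕ+ →₀ ℕ) = 0 := by simp [wtMon]
    have hdeg : degWedge ((∅, ∅) : Finset ℕ+ × Finset ℕ+) = 0 := by simp [degWedge]
    rw [hwt, hdeg]
    norm_num
    simp [Finsupp.smul_single, MvPolynomial.C_eq_smul_one]
end

section
/- For all m, n ∈ ℤ, every pair (S,T) of finite subsets of the positive integers, and every p ∈ ℤ: (Z⁺(m)Z⁻(n) − Z⁺(m−1)Z⁻(n+1) − Z⁻(n)Z⁺(m) + Z⁻(n−1)Z⁺(m+1))(v_{S,T} ⊗ e^{pα}) = (2p + 2n)·δ_{m+n,0}·(v_{S,T} ⊗ e^{pα}). (This is the componentwise form of the generalized commutator relation Z⁺(z)Z⁻(w)(1−w/z) − Z⁻(w)Z⁺(z)(1−z/w) = H(0)δ(w/z) − 2w∂_w δ(w/z), where H(0) acts on e^{pα} by 2p.) -/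
open MvPolynomial

lemma half_den (a : ℤ) : ((a:ℚ) + 1/2).den = 2 := by
  have h : ((a:ℚ) + 1/2) = ((2*a+1 : ℤ) : ℚ) / ((2:ℤ):ℚ) := by push_cast; ring
  rw [h]
  have := Rat.den_div_eq_of_coprime (a := 2*a+1) (b := 2) (by norm_num)
    (Nat.coprime_two_right.mpr (Int.natAbs_odd.mpr ⟨a, by ring⟩))
  omega

lemma half_floor (a : ℤ) : ⌊(a:ℚ) + 1/2⌋ = a := by
  rw [add_comm, Int.floor_add_intCast]; norm_num

lemma Abasis_pos_mem (a : ℤ) (k : ℕ+) (hk : (k:ℤ) = a) (S T : Finset ℕ+) (h : k ∈ T) :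
    Abasis ((a:ℚ) + 1/2) (S, T) =
      ((a:ℂ) * (-1) ^ (S.card + (k:ℕ) - (T.filter (· < k)).card)) •
        Finsupp.single (S, T.erase k) 1 := by
  have hk1 : (1:ℕ) ≤ (k:ℕ) := k.2
  have ha : 1 ≤ a := by omega
  simp only [Abasis, half_den, half_floor, reduceIte, dif_pos ha]
  have hk2 : ((k:ℕ):ℤ) = a := by exact_mod_cast hk
  have hkk : (⟨a.toNat, by omega⟩ : ℕ+) = k := by
    apply Subtype.ext
    show a.toNat = (k:ℕ)
    omega
  have hkk' : ∀ pf, (⟨⌊(a:ℚ)+1/2⌋.toNat, pf⟩ : {n : ℕ // 0 < n}) = k := fun pf =>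
    Subtype.ext (by show ⌊(a:ℚ)+1/2⌋.toNat = (k:ℕ); rw [half_floor]; omega)
  have hkk'' : ∀ pf, (⟨a.toNat, pf⟩ : {n : ℕ // 0 < n}) = k := fun pf =>
    Subtype.ext (by show a.toNat = (k:ℕ); omega)
  simp only [hkk', hkk'', if_pos h]
  have : a.toNat = (k:ℕ) := by omega
  rw [this]

lemma Abasis_pos_notmem (a : ℤ) (k : ℕ+) (hk : (k:ℤ) = a) (S T : Finset ℕ+) (h : k ∉ T) :
    Abasis ((a:ℚ) + 1/2) (S, T) = 0 := by
  have hk1 : (1:ℕ) ≤ (k:ℕ) := k.2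
  have ha : 1 ≤ a := by omega
  simp only [Abasis, half_den, half_floor, reduceIte, dif_pos ha]
  have hk2 : ((k:ℕ):ℤ) = a := by exact_mod_cast hk
  have hkk : (⟨a.toNat, by omega⟩ : ℕ+) = k := by
    apply Subtype.ext
    show a.toNat = (k:ℕ)
    omega
  have hkk' : ∀ pf, (⟨⌊(a:ℚ)+1/2⌋.toNat, pf⟩ : {n : ℕ // 0 < n}) = k := fun pf =>
    Subtype.ext (by show ⌊(a:ℚ)+1/2⌋.toNat = (k:ℕ); rw [half_floor]; omega)
  simp only [hkk', if_neg h]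

lemma Abasis_neg_mem (a : ℤ) (s : ℕ+) (hs : (s:ℤ) = -a-1) (S T : Finset ℕ+) (h : s ∈ S) :
    Abasis ((a:ℚ) + 1/2) (S, T) = 0 := by
  have hs1 : (1:ℕ) ≤ (s:ℕ) := s.2
  have hs2 : ((s:ℕ):ℤ) = -a-1 := by exact_mod_cast hs
  have ha : a ≤ -2 := by omega
  simp only [Abasis, half_den, half_floor, reduceIte]
  rw [dif_neg (by omega), dif_pos ha]
  have hss : (⟨(-a-1).toNat, by omega⟩ : ℕ+) = s := by
    apply Subtype.ext
    show (-a-1).toNat = (s:ℕ)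
    omega
  have hss' : ∀ pf, (⟨(-⌊(a:ℚ)+1/2⌋ - 1).toNat, pf⟩ : {n : ℕ // 0 < n}) = s := fun pf =>
    Subtype.ext (by show (-⌊(a:ℚ)+1/2⌋ - 1).toNat = (s:ℕ); rw [half_floor]; omega)
  simp only [hss', if_pos h]

lemma Abasis_neg_notmem (a : ℤ) (s : ℕ+) (hs : (s:ℤ) = -a-1) (S T : Finset ℕ+) (h : s ∉ S) :
    Abasis ((a:ℚ) + 1/2) (S, T) =
      ((a:ℂ) * (-1) ^ ((S.filter (s < ·)).card)) • Finsupp.single (insert s S, T) 1 := by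
  have hs1 : (1:ℕ) ≤ (s:ℕ) := s.2
  have hs2 : ((s:ℕ):ℤ) = -a-1 := by exact_mod_cast hs
  have ha : a ≤ -2 := by omega
  simp only [Abasis, half_den, half_floor, reduceIte]
  rw [dif_neg (by omega), dif_pos ha]
  have hss : (⟨(-a-1).toNat, by omega⟩ : ℕ+) = s := by
    apply Subtype.ext
    show (-a-1).toNat = (s:ℕ)
    omega
  have hss' : ∀ pf, (⟨(-⌊(a:ℚ)+1/2⌋ - 1).toNat, pf⟩ : {n : ℕ // 0 < n}) = s := fun pf =>
    Subtype.ext (by show (-⌊(a:ℚ)+1/2⌋ - 1).toNat = (s:ℕ); rw [half_floor]; omega)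
  have hss'' : ∀ pf, (⟨(-a-1).toNat, pf⟩ : {n : ℕ // 0 < n}) = s := fun pf =>
    Subtype.ext (by show (-a-1).toNat = (s:ℕ); omega)
  simp only [hss', hss'', if_neg h]

lemma Abasis_degen (a : ℤ) (h : a = 0 ∨ a = -1) (ST : Finset ℕ+ × Finset ℕ+) :
    Abasis ((a:ℚ) + 1/2) ST = 0 := by
  simp only [Abasis, half_den, half_floor, reduceIte]
  rw [dif_neg (by omega), dif_neg (by omega)]

lemma Astar_pos_mem (a : ℤ) (s : ℕ+) (hs : (s:ℤ) = a) (S T : Finset ℕ+) (h : s ∈ S) :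
    AstarBasis ((a:ℚ) + 1/2) (S, T) =
      ((a:ℂ) * (-1) ^ ((S.filter (s < ·)).card)) • Finsupp.single (S.erase s, T) 1 := by
  have hs1 : (1:ℕ) ≤ (s:ℕ) := s.2
  have hs2 : ((s:ℕ):ℤ) = a := by exact_mod_cast hs
  have ha : 1 ≤ a := by omega
  simp only [AstarBasis, half_den, half_floor, reduceIte, dif_pos ha]
  have hss : (⟨a.toNat, by omega⟩ : ℕ+) = s := by
    apply Subtype.ext
    show a.toNat = (s:ℕ)
    omega
  have hss' : ∀ pf, (⟨⌊(a:ℚ)+1/2⌋.toNat, pf⟩ : {n : ℕ // 0 < n}) = s := fun pf =>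
    Subtype.ext (by show ⌊(a:ℚ)+1/2⌋.toNat = (s:ℕ); rw [half_floor]; omega)
  have hss'' : ∀ pf, (⟨a.toNat, pf⟩ : {n : ℕ // 0 < n}) = s := fun pf =>
    Subtype.ext (by show a.toNat = (s:ℕ); omega)
  simp only [hss', hss'', if_pos h]

lemma Astar_pos_notmem (a : ℤ) (s : ℕ+) (hs : (s:ℤ) = a) (S T : Finset ℕ+) (h : s ∉ S) :
    AstarBasis ((a:ℚ) + 1/2) (S, T) = 0 := by
  have hs1 : (1:ℕ) ≤ (s:ℕ) := s.2
  have hs2 : ((s:ℕ):ℤ) = a := by exact_mod_cast hs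
  have ha : 1 ≤ a := by omega
  simp only [AstarBasis, half_den, half_floor, reduceIte, dif_pos ha]
  have hss : (⟨a.toNat, by omega⟩ : ℕ+) = s := by
    apply Subtype.ext
    show a.toNat = (s:ℕ)
    omega
  have hss' : ∀ pf, (⟨⌊(a:ℚ)+1/2⌋.toNat, pf⟩ : {n : ℕ // 0 < n}) = s := fun pf =>
    Subtype.ext (by show ⌊(a:ℚ)+1/2⌋.toNat = (s:ℕ); rw [half_floor]; omega)
  simp only [hss', if_neg h]

lemma Astar_neg_mem (a : ℤ) (k : ℕ+) (hk : (k:ℤ) = -a-1) (S T : Finset ℕ+) (h : k ∈ T) :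
    AstarBasis ((a:ℚ) + 1/2) (S, T) = 0 := by
  have hk1 : (1:ℕ) ≤ (k:ℕ) := k.2
  have hk2 : ((k:ℕ):ℤ) = -a-1 := by exact_mod_cast hk
  have ha : a ≤ -2 := by omega
  simp only [AstarBasis, half_den, half_floor, reduceIte]
  rw [dif_neg (by omega), dif_pos ha]
  have hkk : (⟨(-a-1).toNat, by omega⟩ : ℕ+) = k := by
    apply Subtype.ext
    show (-a-1).toNat = (k:ℕ)
    omega
  have hkk' : ∀ pf, (⟨(-⌊(a:ℚ)+1/2⌋ - 1).toNat, pf⟩ : {n : ℕ // 0 < n}) = k := fun pf =>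
    Subtype.ext (by show (-⌊(a:ℚ)+1/2⌋ - 1).toNat = (k:ℕ); rw [half_floor]; omega)
  simp only [hkk', if_pos h]

lemma Astar_neg_notmem (a : ℤ) (k : ℕ+) (hk : (k:ℤ) = -a-1) (S T : Finset ℕ+) (h : k ∉ T) :
    AstarBasis ((a:ℚ) + 1/2) (S, T) =
      ((a:ℂ) * (-1) ^ (S.card + (k:ℕ) - (T.filter (· < k)).card)) •
        Finsupp.single (S, insert k T) 1 := by
  have hk1 : (1:ℕ) ≤ (k:ℕ) := k.2
  have hk2 : ((k:ℕ):ℤ) = -a-1 := by exact_mod_cast hk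
  have ha : a ≤ -2 := by omega
  simp only [AstarBasis, half_den, half_floor, reduceIte]
  rw [dif_neg (by omega), dif_pos ha]
  have hkk : (⟨(-a-1).toNat, by omega⟩ : ℕ+) = k := by
    apply Subtype.ext
    show (-a-1).toNat = (k:ℕ)
    omega
  have hkk' : ∀ pf, (⟨(-⌊(a:ℚ)+1/2⌋ - 1).toNat, pf⟩ : {n : ℕ // 0 < n}) = k := fun pf =>
    Subtype.ext (by show (-⌊(a:ℚ)+1/2⌋ - 1).toNat = (k:ℕ); rw [half_floor]; omega)
  have hkk'' : ∀ pf, (⟨(-a-1).toNat, pf⟩ : {n : ℕ // 0 < n}) = k := fun pf =>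
    Subtype.ext (by show (-a-1).toNat = (k:ℕ); omega)
  simp only [hkk', hkk'', if_neg h]
  have : (-a-1).toNat = (k:ℕ) := by omega
  rw [this]

lemma Astar_degen (a : ℤ) (h : a = 0 ∨ a = -1) (ST : Finset ℕ+ × Finset ℕ+) :
    AstarBasis ((a:ℚ) + 1/2) ST = 0 := by
  simp only [AstarBasis, half_den, half_floor, reduceIte]
  rw [dif_neg (by omega), dif_neg (by omega)]

lemma Aop_single (q : ℚ) (ST : Finset ℕ+ × Finset ℕ+) (c : ℂ) :
    Aop q (Finsupp.single ST c) = c • Abasis q ST := by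
  simp [Aop]

lemma AstarOp_single (q : ℚ) (ST : Finset ℕ+ × Finset ℕ+) (c : ℂ) :
    AstarOp q (Finsupp.single ST c) = c • AstarBasis q ST := by
  simp [AstarOp]

lemma Aop_degen (a : ℤ) (h : a = 0 ∨ a = -1) (x : Wedge) : Aop ((a:ℚ)+1/2) x = 0 := by
  rw [Aop]
  rw [Finsupp.lsum_apply]
  rw [Finsupp.sum]
  apply Finset.sum_eq_zero
  intro ST _
  rw [LinearMap.toSpanSingleton_apply, Abasis_degen a h, smul_zero]

lemma card_filter_lt (T : Finset ℕ+) (k : ℕ+) : (T.filter (· < k)).card < (k:ℕ) := by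
  classical
  have hinj : ((T.filter (· < k)).image (fun x : ℕ+ => (x:ℕ))).card = (T.filter (· < k)).card :=
    Finset.card_image_of_injective _ (fun x y hxy => PNat.coe_injective hxy)
  have hsub : (T.filter (· < k)).image (fun x : ℕ+ => (x:ℕ)) ⊆ Finset.Ico 1 (k:ℕ) := by
    intro x hx
    simp only [Finset.mem_image, Finset.mem_filter] at hx
    obtain ⟨y, ⟨_, hy⟩, rfl⟩ := hx
    simp only [Finset.mem_Ico]
    exact ⟨y.2, by exact_mod_cast hy⟩
  have hcard := Finset.card_le_card hsub
  rw [hinj] at hcard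
  rw [Nat.card_Ico] at hcard
  have hk1 : (1:ℕ) ≤ (k:ℕ) := k.2
  omega

lemma neg_one_pow_add_eq_zero {e1 e2 : ℕ} (h : (e1 + e2) % 2 = 1) :
    (-1:ℂ)^e1 + (-1:ℂ)^e2 = 0 := by
  have h2 : (-1:ℂ)^(e1+e2) = -1 := Odd.neg_one_pow (Nat.odd_iff.mpr h)
  have h3 : (-1:ℂ)^e2 * (-1:ℂ)^e2 = 1 := by
    rw [← pow_add]
    exact Even.neg_one_pow ⟨e2, rfl⟩
  rw [pow_add] at h2
  linear_combination ((-1:ℂ)^e2) * h2 - ((-1:ℂ)^e1) * h3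

lemma coeff_cancel (A B : ℂ) (e1 e2 e3 e4 : ℕ) (h : (e1+e2+e3+e4) % 2 = 1)
    (P : (Finset ℕ+ × Finset ℕ+) →₀ ℂ) :
    (B * (-1)^e1) • ((A * (-1)^e2) • P) + (A * (-1)^e3) • ((B * (-1)^e4) • P) = 0 := by
  rw [smul_smul, smul_smul, ← add_smul]
  have h1 : (-1:ℂ)^(e1+e2) + (-1:ℂ)^(e3+e4) = 0 := neg_one_pow_add_eq_zero (by omega)
  rw [pow_add, pow_add] at h1
  have : B * (-1:ℂ)^e1 * (A * (-1)^e2) + A * (-1:ℂ)^e3 * (B * (-1)^e4) = 0 := by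
    linear_combination (A*B) * h1
  rw [this, zero_smul]

lemma coeff_same (A B : ℂ) (e1 e2 : ℕ) (h : (e1+e2) % 2 = 0) :
    (A * (-1:ℂ)^e1) * (B * (-1:ℂ)^e2) = A * B := by
  have h1 : (-1:ℂ)^(e1+e2) = 1 := Even.neg_one_pow (Nat.even_iff.mpr h)
  rw [pow_add] at h1
  linear_combination (A*B) * h1

set_option maxHeartbeats 2000000 in
lemma key (a b : ℤ) (S T : Finset ℕ+) :
    Aop ((a:ℚ)+1/2) (AstarBasis ((b:ℚ)+1/2) (S,T))
      + AstarOp ((b:ℚ)+1/2) (Abasis ((a:ℚ)+1/2) (S,T))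
      = (if a + b + 1 = 0 then ((a:ℂ) * (b:ℂ)) else 0) • Finsupp.single (S,T) (1:ℂ) := by
  have hAstdeg : (b = 0 ∨ b = -1) → ∀ x : Wedge, AstarOp ((b:ℚ)+1/2) x = 0 := by
    intro hb0 x
    rw [AstarOp, Finsupp.lsum_apply, Finsupp.sum]
    apply Finset.sum_eq_zero
    intro ST _
    rw [LinearMap.toSpanSingleton_apply, Astar_degen b hb0, smul_zero]
  by_cases ha0 : a = 0 ∨ a = -1
  · rw [Abasis_degen a ha0, map_zero, Aop_degen a ha0, zero_add]
    symm
    rw [smul_eq_zero]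
    left
    split_ifs with hc
    · rcases ha0 with rfl | rfl
      · simp
      · have hb' : b = 0 := by omega
        subst hb'; simp
    · rfl
  by_cases hb0 : b = 0 ∨ b = -1
  · rw [Astar_degen b hb0, map_zero, zero_add, hAstdeg hb0]
    symm
    rw [smul_eq_zero]
    left
    split_ifs with hc
    · rcases hb0 with rfl | rfl
      · simp
      · have ha' : a = 0 := by omega
        subst ha'; simp
    · rfl
  have ha : 1 ≤ a ∨ a ≤ -2 := by omega
  have hb : 1 ≤ b ∨ b ≤ -2 := by omega
  rcases ha with ha | ha <;> rcases hb with hb | hb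
  · -- Case 1 : 1 ≤ a, 1 ≤ b
    set k : ℕ+ := ⟨a.toNat, by omega⟩
    set sb : ℕ+ := ⟨b.toNat, by omega⟩
    have hk : (k : ℤ) = a := by show (a.toNat : ℤ) = a; omega
    have hsb : (sb : ℤ) = b := by show (b.toNat : ℤ) = b; omega
    rw [if_neg (by omega), zero_smul]
    by_cases hsS : sb ∈ S
    · by_cases hkT : k ∈ T
      · rw [Astar_pos_mem b sb hsb S T hsS, Abasis_pos_mem a k hk S T hkT]
        rw [map_smul, map_smul, Aop_single, AstarOp_single, one_smul, one_smul]
        rw [Abasis_pos_mem a k hk (S.erase sb) T hkT,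
            Astar_pos_mem b sb hsb S (T.erase k) hsS]
        apply coeff_cancel
        have h1 : (S.erase sb).card = S.card - 1 := Finset.card_erase_of_mem hsS
        have h2 : 1 ≤ S.card := Finset.card_pos.mpr ⟨sb, hsS⟩
        have h3 := card_filter_lt T k
        omega
      · rw [Abasis_pos_notmem a k hk S T hkT, map_zero, add_zero,
            Astar_pos_mem b sb hsb S T hsS, map_smul, Aop_single, one_smul,
            Abasis_pos_notmem a k hk (S.erase sb) T hkT, smul_zero]
    · rw [Astar_pos_notmem b sb hsb S T hsS, map_zero, zero_add]
      by_cases hkT : k ∈ T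
      · rw [Abasis_pos_mem a k hk S T hkT, map_smul, AstarOp_single, one_smul,
            Astar_pos_notmem b sb hsb S (T.erase k) hsS, smul_zero]
      · rw [Abasis_pos_notmem a k hk S T hkT, map_zero]
  · -- Case 2 : 1 ≤ a, b ≤ -2
    set k : ℕ+ := ⟨a.toNat, by omega⟩
    set kk : ℕ+ := ⟨(-b-1).toNat, by omega⟩
    have hk : (k : ℤ) = a := by show (a.toNat : ℤ) = a; omega
    have hkk : (kk : ℤ) = -b-1 := by show ((-b-1).toNat : ℤ) = -b-1; omega
    by_cases heq : a + b + 1 = 0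
    · rw [if_pos heq]
      have hk2 : (k:ℤ) = -b-1 := by rw [hk]; omega
      by_cases hkT : k ∈ T
      · rw [Astar_neg_mem b k hk2 S T hkT, map_zero, zero_add,
            Abasis_pos_mem a k hk S T hkT, map_smul, AstarOp_single, one_smul,
            Astar_neg_notmem b k hk2 S (T.erase k) (Finset.notMem_erase k T),
            Finset.insert_erase hkT]
        have hfe : ((T.erase k).filter (· < k)) = (T.filter (· < k)) := by
          rw [Finset.filter_erase]
          apply Finset.erase_eq_of_notMem
          intro hcon
          exact absurd (Finset.mem_filter.mp hcon).2 (lt_irrefl k)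
        rw [hfe, smul_smul, coeff_same ((a:ℂ)) ((b:ℂ)) _ _ (by omega)]
      · rw [Abasis_pos_notmem a k hk S T hkT, map_zero, add_zero,
            Astar_neg_notmem b k hk2 S T hkT, map_smul, Aop_single, one_smul,
            Abasis_pos_mem a k hk S (insert k T) (Finset.mem_insert_self k T),
            Finset.erase_insert hkT]
        have hfi : ((insert k T).filter (· < k)) = (T.filter (· < k)) := by
          rw [Finset.filter_insert, if_neg (lt_irrefl k)]
        rw [hfi, smul_smul, coeff_same ((b:ℂ)) ((a:ℂ)) _ _ (by omega),
            mul_comm ((b:ℂ)) ((a:ℂ))]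
    · rw [if_neg heq, zero_smul]
      have hne : kk ≠ k := by
        intro hcon
        rw [hcon, hk] at hkk
        omega
      by_cases hkT : k ∈ T <;> by_cases hkkT : kk ∈ T
      · rw [Astar_neg_mem b kk hkk S T hkkT, map_zero, zero_add,
            Abasis_pos_mem a k hk S T hkT, map_smul, AstarOp_single, one_smul,
            Astar_neg_mem b kk hkk S (T.erase k) (Finset.mem_erase.mpr ⟨hne, hkkT⟩),
            smul_zero]
      · rw [Astar_neg_notmem b kk hkk S T hkkT, map_smul, Aop_single, one_smul,
            Abasis_pos_mem a k hk S (insert kk T) (Finset.mem_insert_of_mem hkT),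
            Abasis_pos_mem a k hk S T hkT, map_smul, AstarOp_single, one_smul,
            Astar_neg_notmem b kk hkk S (T.erase k)
              (fun hcon => hkkT (Finset.mem_of_mem_erase hcon)),
            Finset.erase_insert_of_ne hne]
        have h3 := card_filter_lt T k
        have h4 := card_filter_lt T kk
        by_cases hlt : kk < k
        · have h5 : ((insert kk T).filter (· < k)).card = (T.filter (· < k)).card + 1 := by
            rw [Finset.filter_insert, if_pos hlt,
              Finset.card_insert_of_notMem (fun hcon => hkkT (Finset.mem_of_mem_filter _ hcon))]
          have h6 : ((T.erase k).filter (· < kk)) = (T.filter (· < kk)) := by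
            rw [Finset.filter_erase]
            exact Finset.erase_eq_of_notMem
              (fun hcon => absurd (Finset.mem_filter.mp hcon).2 (fun h => lt_asymm hlt h))
          rw [h6]
          apply coeff_cancel
          omega
        · have hlt2 : k < kk := lt_of_le_of_ne (le_of_not_gt hlt) (Ne.symm hne)
          have h5 : ((insert kk T).filter (· < k)) = (T.filter (· < k)) := by
            rw [Finset.filter_insert, if_neg (fun h => lt_asymm hlt2 h)]
          have h6 : ((T.erase k).filter (· < kk)).card = (T.filter (· < kk)).card - 1 := by
            rw [Finset.filter_erase,
              Finset.card_erase_of_mem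
                (show k ∈ T.filter (· < kk) from Finset.mem_filter.mpr ⟨hkT, hlt2⟩)]
          have h7 : 1 ≤ (T.filter (· < kk)).card :=
            Finset.card_pos.mpr ⟨k, Finset.mem_filter.mpr ⟨hkT, hlt2⟩⟩
          rw [h5]
          apply coeff_cancel
          omega
      · rw [Astar_neg_mem b kk hkk S T hkkT, map_zero, zero_add,
            Abasis_pos_notmem a k hk S T hkT, map_zero]
      · rw [Abasis_pos_notmem a k hk S T hkT, map_zero, add_zero,
            Astar_neg_notmem b kk hkk S T hkkT, map_smul, Aop_single, one_smul,
            Abasis_pos_notmem a k hk S (insert kk T)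
              (fun hcon => by
                rcases Finset.mem_insert.mp hcon with h | h
                · exact hne h.symm
                · exact hkT h),
            smul_zero]
  · -- Case 3 : a ≤ -2, 1 ≤ b
    set s : ℕ+ := ⟨(-a-1).toNat, by omega⟩
    set sb : ℕ+ := ⟨b.toNat, by omega⟩
    have hs : (s : ℤ) = -a-1 := by show ((-a-1).toNat : ℤ) = -a-1; omega
    have hsb : (sb : ℤ) = b := by show (b.toNat : ℤ) = b; omega
    by_cases heq : a + b + 1 = 0
    · rw [if_pos heq]
      have hs2 : (sb:ℤ) = -a-1 := by rw [hsb]; omega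
      by_cases hsS : sb ∈ S
      · rw [Abasis_neg_mem a sb hs2 S T hsS, map_zero, add_zero,
            Astar_pos_mem b sb hsb S T hsS, map_smul, Aop_single, one_smul,
            Abasis_neg_notmem a sb hs2 (S.erase sb) T (Finset.notMem_erase sb S),
            Finset.insert_erase hsS]
        have hfe : ((S.erase sb).filter (sb < ·)) = (S.filter (sb < ·)) := by
          rw [Finset.filter_erase]
          exact Finset.erase_eq_of_notMem
            (fun hcon => absurd (Finset.mem_filter.mp hcon).2 (lt_irrefl sb))
        rw [hfe, smul_smul, coeff_same ((b:ℂ)) ((a:ℂ)) _ _ (by omega),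
            mul_comm ((b:ℂ)) ((a:ℂ))]
      · rw [Astar_pos_notmem b sb hsb S T hsS, map_zero, zero_add,
            Abasis_neg_notmem a sb hs2 S T hsS, map_smul, AstarOp_single, one_smul,
            Astar_pos_mem b sb hsb (insert sb S) T (Finset.mem_insert_self sb S),
            Finset.erase_insert hsS]
        have hfi : ((insert sb S).filter (sb < ·)) = (S.filter (sb < ·)) := by
          rw [Finset.filter_insert, if_neg (lt_irrefl sb)]
        rw [hfi, smul_smul, coeff_same ((a:ℂ)) ((b:ℂ)) _ _ (by omega)]
    · rw [if_neg heq, zero_smul]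
      have hne : s ≠ sb := by
        intro hcon
        rw [hcon, hsb] at hs
        omega
      by_cases hsbS : sb ∈ S <;> by_cases hsS : s ∈ S
      · rw [Abasis_neg_mem a s hs S T hsS, map_zero, add_zero,
            Astar_pos_mem b sb hsb S T hsbS, map_smul, Aop_single, one_smul,
            Abasis_neg_mem a s hs (S.erase sb) T (Finset.mem_erase.mpr ⟨hne, hsS⟩),
            smul_zero]
      · rw [Astar_pos_mem b sb hsb S T hsbS, map_smul, Aop_single, one_smul,
            Abasis_neg_notmem a s hs (S.erase sb) T
              (fun hcon => hsS (Finset.mem_of_mem_erase hcon)),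
            Abasis_neg_notmem a s hs S T hsS, map_smul, AstarOp_single, one_smul,
            Astar_pos_mem b sb hsb (insert s S) T (Finset.mem_insert_of_mem hsbS),
            Finset.erase_insert_of_ne hne]
        by_cases hlt : s < sb
        · have h5 : ((S.erase sb).filter (s < ·)).card = (S.filter (s < ·)).card - 1 := by
            rw [Finset.filter_erase,
              Finset.card_erase_of_mem (Finset.mem_filter.mpr ⟨hsbS, hlt⟩)]
          have h7 : 1 ≤ (S.filter (s < ·)).card :=
            Finset.card_pos.mpr ⟨sb, Finset.mem_filter.mpr ⟨hsbS, hlt⟩⟩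
          have h6 : ((insert s S).filter (sb < ·)) = (S.filter (sb < ·)) := by
            rw [Finset.filter_insert, if_neg (fun h => lt_asymm hlt h)]
          rw [h6]
          apply coeff_cancel
          omega
        · have hlt2 : sb < s := lt_of_le_of_ne (le_of_not_gt hlt) hne.symm
          have h5 : ((S.erase sb).filter (s < ·)) = (S.filter (s < ·)) := by
            rw [Finset.filter_erase]
            exact Finset.erase_eq_of_notMem
              (fun hcon => absurd (Finset.mem_filter.mp hcon).2 (fun h => lt_asymm hlt2 h))
          have h6 : ((insert s S).filter (sb < ·)).card = (S.filter (sb < ·)).card + 1 := by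
            rw [Finset.filter_insert, if_pos hlt2,
              Finset.card_insert_of_notMem (fun hcon => hsS (Finset.mem_of_mem_filter _ hcon))]
          rw [h5]
          apply coeff_cancel
          omega
      · rw [Astar_pos_notmem b sb hsb S T hsbS, map_zero, zero_add,
            Abasis_neg_mem a s hs S T hsS, map_zero]
      · rw [Astar_pos_notmem b sb hsb S T hsbS, map_zero, zero_add,
            Abasis_neg_notmem a s hs S T hsS, map_smul, AstarOp_single, one_smul,
            Astar_pos_notmem b sb hsb (insert s S) T
              (fun hcon => by
                rcases Finset.mem_insert.mp hcon with h | h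
                · exact hne h.symm
                · exact hsbS h),
            smul_zero]
  · -- Case 4 : a ≤ -2, b ≤ -2
    set s : ℕ+ := ⟨(-a-1).toNat, by omega⟩
    set kk : ℕ+ := ⟨(-b-1).toNat, by omega⟩
    have hs : (s : ℤ) = -a-1 := by show ((-a-1).toNat : ℤ) = -a-1; omega
    have hkk : (kk : ℤ) = -b-1 := by show ((-b-1).toNat : ℤ) = -b-1; omega
    rw [if_neg (by omega), zero_smul]
    by_cases hsS : s ∈ S
    · by_cases hkkT : kk ∈ T
      · rw [Astar_neg_mem b kk hkk S T hkkT, map_zero, zero_add,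
            Abasis_neg_mem a s hs S T hsS, map_zero]
      · rw [Abasis_neg_mem a s hs S T hsS, map_zero, add_zero,
            Astar_neg_notmem b kk hkk S T hkkT, map_smul, Aop_single, one_smul,
            Abasis_neg_mem a s hs S (insert kk T) hsS, smul_zero]
    · by_cases hkkT : kk ∈ T
      · rw [Astar_neg_mem b kk hkk S T hkkT, map_zero, zero_add,
            Abasis_neg_notmem a s hs S T hsS, map_smul, AstarOp_single, one_smul,
            Astar_neg_mem b kk hkk (insert s S) T hkkT, smul_zero]
      · rw [Astar_neg_notmem b kk hkk S T hkkT, map_smul, Aop_single, one_smul,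
            Abasis_neg_notmem a s hs S (insert kk T) hsS,
            Abasis_neg_notmem a s hs S T hsS, map_smul, AstarOp_single, one_smul,
            Astar_neg_notmem b kk hkk (insert s S) T hkkT]
        have h1 : (insert s S).card = S.card + 1 := Finset.card_insert_of_notMem hsS
        have h3 := card_filter_lt T kk
        apply coeff_cancel
        omega

lemma embVac_eq (w : Wedge) (p : ℤ) :
    embVac w p = Finsupp.mapDomain (fun ST => (ST, p)) w := rfl

lemma embVac_add (x y : Wedge) (p : ℤ) :
    embVac (x + y) p = embVac x p + embVac y p := by
  rw [embVac_eq, embVac_eq, embVac_eq, Finsupp.mapDomain_add]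

lemma embVac_smul (c : ℂ) (x : Wedge) (p : ℤ) :
    embVac (c • x) p = c • embVac x p := by
  rw [embVac_eq, embVac_eq, Finsupp.mapDomain_smul]

lemma embVac_single (ST : Finset ℕ+ × Finset ℕ+) (c : ℂ) (p : ℤ) :
    embVac (Finsupp.single ST c) p = Finsupp.single (ST, p) c := by
  rw [embVac_eq, Finsupp.mapDomain_single]

lemma Zplus_single (m : ℤ) (ST : Finset ℕ+ × Finset ℕ+) (p : ℤ) (c : ℂ) :
    Zplus m (Finsupp.single (ST, p) c)
      = c • embVac (Abasis ((m:ℚ) - (p:ℚ) - 1/2) ST) (p + 1) := by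
  unfold Zplus
  exact Finsupp.sum_single_index (zero_smul ℂ _)

lemma Zminus_single (m : ℤ) (ST : Finset ℕ+ × Finset ℕ+) (p : ℤ) (c : ℂ) :
    Zminus m (Finsupp.single (ST, p) c)
      = c • embVac (AstarBasis ((m:ℚ) + (p:ℚ) - 1/2) ST) (p - 1) := by
  unfold Zminus
  exact Finsupp.sum_single_index (zero_smul ℂ _)

lemma Zplus_add (m : ℤ) (u v : Vac) : Zplus m (u + v) = Zplus m u + Zplus m v := by
  unfold Zplus
  exact Finsupp.sum_add_index' (fun a => zero_smul ℂ _) (fun a b₁ b₂ => add_smul _ _ _)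

lemma Zminus_add (m : ℤ) (u v : Vac) : Zminus m (u + v) = Zminus m u + Zminus m v := by
  unfold Zminus
  exact Finsupp.sum_add_index' (fun a => zero_smul ℂ _) (fun a b₁ b₂ => add_smul _ _ _)

lemma Zplus_embVac (m : ℤ) (w : Wedge) (p : ℤ) :
    Zplus m (embVac w p) = embVac (Aop ((m:ℚ) - (p:ℚ) - 1/2) w) (p + 1) := by
  induction w using Finsupp.induction_linear with
  | zero =>
    have h0 : embVac (0 : Wedge) p = 0 := by rw [embVac_eq, Finsupp.mapDomain_zero]
    have h0' : embVac (0 : Wedge) (p+1) = 0 := by rw [embVac_eq, Finsupp.mapDomain_zero]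
    rw [h0, map_zero, h0']
    unfold Zplus
    exact Finsupp.sum_zero_index
  | add f g hf hg =>
    rw [embVac_add, Zplus_add, hf, hg, map_add, embVac_add]
  | single ST c =>
    rw [embVac_single, Zplus_single, Aop_single, embVac_smul]

lemma Zminus_embVac (m : ℤ) (w : Wedge) (p : ℤ) :
    Zminus m (embVac w p) = embVac (AstarOp ((m:ℚ) + (p:ℚ) - 1/2) w) (p - 1) := by
  induction w using Finsupp.induction_linear with
  | zero =>
    have h0 : embVac (0 : Wedge) p = 0 := by rw [embVac_eq, Finsupp.mapDomain_zero]
    have h0' : embVac (0 : Wedge) (p-1) = 0 := by rw [embVac_eq, Finsupp.mapDomain_zero]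
    rw [h0, map_zero, h0']
    unfold Zminus
    exact Finsupp.sum_zero_index
  | add f g hf hg =>
    rw [embVac_add, Zminus_add, hf, hg, map_add, embVac_add]
  | single ST c =>
    rw [embVac_single, Zminus_single, AstarOp_single, embVac_smul]

theorem statement15 (m n : ℤ) (S T : Finset ℕ+) (p : ℤ) (w : Vac)
    (hw : w = Finsupp.single ((S, T), p) 1) :
    Zplus m (Zminus n w) - Zplus (m - 1) (Zminus (n + 1) w) - Zminus n (Zplus m w) +
        Zminus (n - 1) (Zplus (m + 1) w) =
      if m + n = 0 then ((2 * p + 2 * n : ℤ) : ℂ) • w else 0 := by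
  subst hw
  rw [Zminus_single n (S,T) p 1, one_smul, Zplus_embVac m _ (p-1),
      Zminus_single (n+1) (S,T) p 1, one_smul, Zplus_embVac (m-1) _ (p-1),
      Zplus_single m (S,T) p 1, one_smul, Zminus_embVac n _ (p+1),
      Zplus_single (m+1) (S,T) p 1, one_smul, Zminus_embVac (n-1) _ (p+1)]
  rw [show p - 1 + 1 = p from by ring, show p + 1 - 1 = p from by ring]
  rw [show (m:ℚ) - ((p-1:ℤ):ℚ) - 1/2 = ((m-p:ℤ):ℚ) + 1/2 from by push_cast; ring,
      show (n:ℚ) + (p:ℚ) - 1/2 = ((n+p-1:ℤ):ℚ) + 1/2 from by push_cast; ring,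
      show ((m-1:ℤ):ℚ) - ((p-1:ℤ):ℚ) - 1/2 = ((m-p-1:ℤ):ℚ) + 1/2 from by push_cast; ring,
      show ((n+1:ℤ):ℚ) + (p:ℚ) - 1/2 = ((n+p:ℤ):ℚ) + 1/2 from by push_cast; ring,
      show (n:ℚ) + ((p+1:ℤ):ℚ) - 1/2 = ((n+p:ℤ):ℚ) + 1/2 from by push_cast; ring,
      show (m:ℚ) - (p:ℚ) - 1/2 = ((m-p-1:ℤ):ℚ) + 1/2 from by push_cast; ring,
      show ((n-1:ℤ):ℚ) + ((p+1:ℤ):ℚ) - 1/2 = ((n+p-1:ℤ):ℚ) + 1/2 from by push_cast; ring,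
      show ((m+1:ℤ):ℚ) - (p:ℚ) - 1/2 = ((m-p:ℤ):ℚ) + 1/2 from by push_cast; ring]
  have key1 := key (m-p) (n+p-1) S T
  have key2 := key (m-p-1) (n+p) S T
  simp only [show m - p + (n + p - 1) + 1 = m + n from by ring] at key1
  simp only [show m - p - 1 + (n + p) + 1 = m + n from by ring] at key2
  rw [show ∀ x1 x2 x3 x4 : Vac, x1 - x2 - x3 + x4 = (x1 + x4) - (x2 + x3) from
    fun x1 x2 x3 x4 => by abel]
  rw [← embVac_add, ← embVac_add, key1, key2, embVac_smul, embVac_smul, embVac_single]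
  split_ifs with h
  · rw [← sub_smul]
    congr 1
    have hmn : (m:ℂ) + (n:ℂ) = 0 := by
      have := congrArg (fun z : ℤ => (z:ℂ)) h
      push_cast at this
      exact this
    push_cast
    linear_combination -hmn
  · simp
end
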